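/- Any nilpotent evolution algebra of dimension n and type [n₁,…,n_r] with r ≥ 3 and 2n₁ > n - r + 2, over a field, is decomposable. -/

import Mathlib

/-- The multiplication of a (not necessarily associative) `F`-algebra structure on `A`,
given as a bilinear map. -/
abbrev Mul2 (F A : Type*) [Field F] [AddCommGroup A] [Module F A] :=
  A →ₗ[F] A →ₗ[F] A

variable {F A : Type*} [Field F] [AddCommGroup A] [Module F A]

/-- A submodule is an ideal if it absorbs multiplication on both sides. -/
def IsIdeal (m : Mul2 F A) (I : Submodule F A) : Prop :=
  ∀ x ∈ I, ∀ y : A, m x y ∈ I ∧ m y x ∈ I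

/-- An algebra is decomposable if it is the direct sum of two nonzero ideals. -/
def Decomposable (m : Mul2 F A) : Prop :=
  ∃ I J : Submodule F A, IsIdeal m I ∧ IsIdeal m J ∧ I ≠ ⊥ ∧ J ≠ ⊥ ∧
    I ⊓ J = ⊥ ∧ I ⊔ J = ⊤

/-- The set of `x` with `x A ⊆ N` and `A x ⊆ N`, as a submodule. -/
def annOver (m : Mul2 F A) (N : Submodule F A) : Submodule F A where
  carrier := {x | ∀ y : A, m x y ∈ N ∧ m y x ∈ N}
  add_mem' := by
    intro a b ha hb y
    constructor
    · simpa using N.add_mem (ha y).1 (hb y).1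
    · simpa using N.add_mem (ha y).2 (hb y).2
  zero_mem' := by intro y; simp
  smul_mem' := by
    intro c a ha y
    constructor
    · simpa using N.smul_mem c (ha y).1
    · simpa using N.smul_mem c (ha y).2

/-- The annihilator `{x | xA = Ax = 0}`. -/
def annA (m : Mul2 F A) : Submodule F A := annOver m ⊥

/-- The upper annihilating series: `Ann⁰ = 0`, `Annⁱ/Annⁱ⁻¹ = Ann(A/Annⁱ⁻¹)`. -/
def annSeries (m : Mul2 F A) : ℕ → Submodule F A
  | 0 => ⊥
  | (k+1) => annOver m (annSeries m k)

/-- The span of all products of elements of `I` with elements of `J`. -/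
def mulSub (m : Mul2 F A) (I J : Submodule F A) : Submodule F A :=
  Submodule.span F {z | ∃ x ∈ I, ∃ y ∈ J, z = m x y}

/-- `A²`, the span of all products. -/
def sqA (m : Mul2 F A) : Submodule F A := mulSub m ⊤ ⊤

/-- Right powers: `rpow 0 = A = A^{<1>}`, `rpow (k+1) = (rpow k) · A`. -/
def rpow (m : Mul2 F A) : ℕ → Submodule F A
  | 0 => ⊤
  | (k+1) => mulSub m (rpow m k) ⊤

/-- Full powers: `apow 0 = A = A¹`, `apow (k+1) = Σ_{i+j=k} (apow i)(apow j)`,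
i.e. `A^{k+2} = Σ_{i=1}^{k+1} Aⁱ A^{k+2-i}`. -/
def apow (m : Mul2 F A) : ℕ → Submodule F A
  | 0 => ⊤
  | (k+1) => ⨆ i : Fin (k+1), mulSub m (apow m i.1) (apow m (k - i.1))
  decreasing_by
  · exact i.2
  · exact Nat.lt_succ_of_le (Nat.sub_le _ _)

/-- `A` is nilpotent: `Aⁿ = 0` for some `n`. -/
def IsNilpotentAlg (m : Mul2 F A) : Prop := ∃ n, apow m n = ⊥

/-- `A` is right nilpotent: `A^{<n>} = 0` for some `n`. -/
def IsRightNilpotentAlg (m : Mul2 F A) : Prop := ∃ n, rpow m n = ⊥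

/-- A basis is natural if products of distinct basis vectors vanish. -/
def NaturalBasis (m : Mul2 F A) {ι : Type*} (bs : Module.Basis ι F A) : Prop :=
  ∀ i j, i ≠ j → m (bs i) (bs j) = 0

/-- An evolution algebra: commutative with some finite natural basis. -/
def IsEvolutionAlg (m : Mul2 F A) : Prop :=
  (∀ x y, m x y = m y x) ∧
  ∃ (ι : Type) (_ : Fintype ι) (bs : Module.Basis ι F A), NaturalBasis m bs

/-- The set of `x` with `x N = 0`, as a submodule. -/
def annIn (m : Mul2 F A) (N : Submodule F A) : Submodule F A where
  carrier := {x | ∀ y ∈ N, m x y = 0}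
  add_mem' := by
    intro a b ha hb y hy
    simp [ha y hy, hb y hy]
  zero_mem' := by intro y hy; simp
  smul_mem' := by
    intro c a ha y hy
    simp [ha y hy]


section AuxEvol

open Submodule Module

variable {F A : Type*} [Field F] [AddCommGroup A] [Module F A]
variable {ι : Type*} [Fintype ι]

lemma smul_mem_iff'' (N : Submodule F A) (c : F) (v : A) :
    c • v ∈ N ↔ c = 0 ∨ v ∈ N := by
  constructor
  · intro h
    by_cases hc : c = 0
    · exact Or.inl hc
    · right
      have := N.smul_mem c⁻¹ h
      rwa [smul_smul, inv_mul_cancel₀ hc, one_smul] at this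
  · rintro (rfl | h)
    · simp
    · exact N.smul_mem c h

lemma mul_basis_eq (m : Mul2 F A) {bs : Basis ι F A} (hnat : NaturalBasis m bs)
    (x : A) (j : ι) : m x (bs j) = bs.repr x j • m (bs j) (bs j) := by
  have hx : m x (bs j) = ∑ i, bs.repr x i • m (bs i) (bs j) := by
    conv_lhs => rw [← bs.sum_repr x]
    rw [map_sum, LinearMap.sum_apply]
    congr 1; ext i
    rw [map_smul, LinearMap.smul_apply]
  rw [hx, Finset.sum_eq_single j]
  · intro i _ hij
    rw [hnat i j hij, smul_zero]
  · intro hj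
    exact absurd (Finset.mem_univ j) hj

lemma mul_expand (m : Mul2 F A) {bs : Basis ι F A} (hnat : NaturalBasis m bs)
    (x y : A) : m x y = ∑ j, bs.repr y j • (bs.repr x j • m (bs j) (bs j)) := by
  have hx : m x y = ∑ j, bs.repr y j • m x (bs j) := by
    conv_lhs => rw [← bs.sum_repr y]
    rw [map_sum]
    congr 1; ext j
    rw [map_smul]
  rw [hx]
  congr 1; ext j
  rw [mul_basis_eq m hnat]

lemma mem_annOver_iff (m : Mul2 F A) (hcomm : ∀ x y, m x y = m y x)
    {bs : Basis ι F A} (hnat : NaturalBasis m bs) (N : Submodule F A) (x : A) :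
    x ∈ annOver m N ↔ ∀ j, bs.repr x j • m (bs j) (bs j) ∈ N := by
  constructor
  · intro hx j
    have := (hx (bs j)).1
    rwa [mul_basis_eq m hnat] at this
  · intro hx y
    have h1 : m x y ∈ N := by
      rw [mul_expand m hnat]
      exact Submodule.sum_mem N fun j _ => N.smul_mem _ (hx j)
    exact ⟨h1, by rw [hcomm y x]; exact h1⟩

lemma mul_mem_sq (m : Mul2 F A) {bs : Basis ι F A} (hnat : NaturalBasis m bs)
    (x y : A) : m x y ∈ span F (Set.range fun j => m (bs j) (bs j)) := by
  rw [mul_expand m hnat]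
  refine Submodule.sum_mem _ fun j _ => Submodule.smul_mem _ _ (Submodule.smul_mem _ _ ?_)
  exact subset_span (Set.mem_range_self j)

lemma annOver_mono (m : Mul2 F A) {N N' : Submodule F A} (h : N ≤ N') :
    annOver m N ≤ annOver m N' := fun x hx y => ⟨h (hx y).1, h (hx y).2⟩

lemma annSeries_le_succ (m : Mul2 F A) : ∀ k, annSeries m k ≤ annSeries m (k + 1)
  | 0 => bot_le
  | (k + 1) => annOver_mono m (annSeries_le_succ m k)

lemma annSeries_mono (m : Mul2 F A) {k l : ℕ} (h : k ≤ l) :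
    annSeries m k ≤ annSeries m l :=
  monotone_nat_of_le_succ (annSeries_le_succ m) h

lemma annSeries_stab (m : Mul2 F A) {k : ℕ}
    (h : annSeries m (k + 1) = annSeries m k) :
    ∀ l, k ≤ l → annSeries m l = annSeries m k := by
  intro l hl
  induction l with
  | zero => rw [Nat.le_zero.mp hl]
  | succ n ih =>
    rcases Nat.lt_or_ge k (n + 1) with h1 | h1
    · have hn : k ≤ n := by omega
      show annOver m (annSeries m n) = annSeries m k
      rw [ih hn]
      exact h
    · have hk : k = n + 1 := by omega
      rw [hk]

end AuxEvol

/-- A nilpotent evolution algebra of dimension `n` and type `[n₁,…,n_r]` with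
`r ≥ 3` and `2n₁ > n - r + 2` is decomposable. -/
theorem stmt15 {F E : Type*} [Field F] [AddCommGroup E] [Module F E]
    [FiniteDimensional F E] (m : Mul2 F E) (hev : IsEvolutionAlg m)
    (r : ℕ) (hr : 3 ≤ r)
    (htop : annSeries m r = ⊤) (hmin : annSeries m (r - 1) ≠ ⊤)
    (h : Module.finrank F E - r + 2 < 2 * Module.finrank F (annSeries m 1)) :
    Decomposable m := by
  classical
  obtain ⟨hcomm, ι, iF, bs, hnat⟩ := hev
  set sq : ι → E := fun j => m (bs j) (bs j) with hsq
  set V : Submodule F E := Submodule.span F (Set.range sq) with hVdef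
  -- the chain is strictly increasing below `r`
  have hstrict : ∀ k, k < r → annSeries m k ≠ annSeries m (k + 1) := by
    intro k hk heq
    have hstab := annSeries_stab m heq.symm
    apply hmin
    have h1 : annSeries m (r - 1) = annSeries m k := hstab (r - 1) (by omega)
    have h2 : annSeries m r = annSeries m k := hstab r (by omega)
    rw [h1, ← h2, htop]
  have hchain : ∀ k, k ≤ r → k ≤ Module.finrank F (annSeries m k) := by
    intro k
    induction k with
    | zero => intro _; exact Nat.zero_le _
    | succ n ih =>
      intro hn
      have hlt : annSeries m n < annSeries m (n + 1) :=
        lt_of_le_of_ne (annSeries_le_succ m n) (hstrict n (by omega))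
      have h1 := Submodule.finrank_lt_finrank_of_lt hlt
      have h2 := ih (by omega)
      omega
  have hn3 : 3 ≤ Module.finrank F E := by
    have h1 := hchain r le_rfl
    rw [htop, finrank_top] at h1
    omega
  have hsucc : ∀ (k : ℕ) (x : E),
      x ∈ annSeries m (k + 1) ↔ ∀ j, bs.repr x j • sq j ∈ annSeries m k := by
    intro k x
    exact mem_annOver_iff m hcomm hnat (annSeries m k) x
  -- witnesses in each layer
  have hwit : ∀ a : ℕ, a + 2 ≤ r →
      ∃ j, sq j ∈ annSeries m (a + 1) ∧ sq j ∉ annSeries m a := by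
    intro a ha
    by_contra hcon
    push_neg at hcon
    refine hstrict (a + 1) (by omega) (le_antisymm (annSeries_le_succ m _) ?_)
    intro x hx
    rw [hsucc] at hx ⊢
    intro j
    rcases (smul_mem_iff'' _ _ _).mp (hx j) with hc | hmem
    · rw [hc, zero_smul]
      exact Submodule.zero_mem _
    · exact Submodule.smul_mem _ _ (hcon j hmem)
  by_cases hAV : annSeries m 1 ≤ V
  · -- if the annihilator is contained in the square, the dimension count fails
    exfalso
    have hlow : ∀ k, k + 2 ≤ r →
        Module.finrank F (annSeries m 1) + k ≤
          Module.finrank F (V ⊓ annSeries m (k + 1) : Submodule F E) := by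
      intro k
      induction k with
      | zero =>
        intro _
        simpa using Submodule.finrank_mono (le_inf hAV le_rfl)
      | succ n ih =>
        intro hn
        obtain ⟨j, hj1, hj2⟩ := hwit (n + 1) (by omega)
        have hlt : (V ⊓ annSeries m (n + 1) : Submodule F E) <
            V ⊓ annSeries m (n + 1 + 1) := by
          refine lt_of_le_of_ne (inf_le_inf_left V (annSeries_le_succ m _)) ?_
          intro heq
          have hjmem : sq j ∈ V ⊓ annSeries m (n + 1 + 1) :=
            ⟨Submodule.subset_span (Set.mem_range_self j), hj1⟩
          rw [← heq] at hjmem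
          exact hj2 hjmem.2
        have h1 := Submodule.finrank_lt_finrank_of_lt hlt
        have h2 := ih (by omega)
        omega
    have hlow2 : Module.finrank F (annSeries m 1) + (r - 2) ≤ Module.finrank F V := by
      have h1 := hlow (r - 2) (by omega)
      have h2 : Module.finrank F (V ⊓ annSeries m (r - 2 + 1) : Submodule F E) ≤
          Module.finrank F V := Submodule.finrank_mono inf_le_left
      omega
    have hT : ∃ T : E →ₗ[F] E, (∀ j, T (bs j) = sq j) ∧
        (∀ x : E, T x = ∑ j, bs.repr x j • sq j) := by
      refine ⟨bs.constr F sq, fun j => bs.constr_basis F sq j, fun x => ?_⟩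
      rw [Module.Basis.constr_apply_fintype]
      simp [Module.Basis.equivFun_apply]
    obtain ⟨T, hTb, hTx⟩ := hT
    have hAnnKer : annSeries m 1 ≤ LinearMap.ker T := by
      intro x hx
      rw [LinearMap.mem_ker, hTx]
      refine Finset.sum_eq_zero fun j _ => ?_
      exact (Submodule.mem_bot F).mp ((hsucc 0 x).mp hx j)
    have hVRange : V ≤ LinearMap.range T := by
      rw [hVdef, Submodule.span_le]
      rintro _ ⟨j, rfl⟩
      exact ⟨bs j, hTb j⟩
    have h1 := Submodule.finrank_mono hAnnKer
    have h2 := Submodule.finrank_mono hVRange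
    have h3 := LinearMap.finrank_range_add_finrank_ker T
    omega
  · -- otherwise we build an explicit decomposition
    rw [SetLike.not_le_iff_exists] at hAV
    obtain ⟨u, huA, huV⟩ := hAV
    have hu0 : u ≠ 0 := fun hu => huV (hu ▸ Submodule.zero_mem V)
    obtain ⟨C, hC⟩ := Submodule.exists_isCompl (Submodule.span F {u} ⊔ V)
    refine ⟨Submodule.span F {u}, V ⊔ C, ?_, ?_, ?_, ?_, ?_, ?_⟩
    · -- `span {u}` is an ideal, being inside the annihilator
      intro x hx y
      have hle : Submodule.span F {u} ≤ annSeries m 1 := by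
        rw [Submodule.span_le]
        exact Set.singleton_subset_iff.mpr huA
      have hxA : ∀ z : E, m x z ∈ (⊥ : Submodule F E) ∧ m z x ∈ (⊥ : Submodule F E) :=
        hle hx
      have h1 : m x y = 0 := (Submodule.mem_bot F).mp (hxA y).1
      have h2 : m y x = 0 := (Submodule.mem_bot F).mp (hxA y).2
      rw [h1, h2]
      exact ⟨Submodule.zero_mem _, Submodule.zero_mem _⟩
    · -- `V ⊔ C` is an ideal, containing all products
      intro x _ y
      have hsub : V ≤ V ⊔ C := le_sup_left
      exact ⟨hsub (mul_mem_sq m hnat x y), hsub (mul_mem_sq m hnat y x)⟩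
    · -- `span {u} ≠ ⊥`
      simpa using hu0
    · -- `V ⊔ C ≠ ⊥`
      intro hJ
      have hsup : Submodule.span F {u} ⊔ (V ⊔ C) = ⊤ := by
        rw [← sup_assoc]
        exact hC.sup_eq_top
      rw [hJ, sup_bot_eq] at hsup
      have hfr := finrank_span_singleton (K := F) hu0
      rw [hsup, finrank_top] at hfr
      omega
    · -- the two ideals intersect trivially
      rw [eq_bot_iff]
      intro x hx
      obtain ⟨hxI, hxJ⟩ := Submodule.mem_inf.mp hx
      obtain ⟨c, rfl⟩ := Submodule.mem_span_singleton.mp hxI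
      obtain ⟨v, hv, w, hw, hvw⟩ := Submodule.mem_sup.mp hxJ
      have hwmem : w ∈ (Submodule.span F {u} ⊔ V) ⊓ C := by
        constructor
        · have hweq : w = c • u - v := by
            rw [← hvw]
            abel
          rw [hweq]
          exact Submodule.sub_mem _
            (Submodule.mem_sup_left
              (Submodule.smul_mem _ c (Submodule.mem_span_singleton_self u)))
            (Submodule.mem_sup_right hv)
        · exact hw
      have hw0 : w = 0 := by
        have hb := hC.inf_eq_bot
        rw [hb] at hwmem
        exact (Submodule.mem_bot F).mp hwmem
      have hcu : c • u ∈ V := by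
        rw [hw0, add_zero] at hvw
        rw [← hvw]
        exact hv
      rcases (smul_mem_iff'' V c u).mp hcu with hc | hmem
      · rw [Submodule.mem_bot, hc, zero_smul]
      · exact absurd hmem huV
    · -- and they span everything
      rw [← sup_assoc]
      exact hC.sup_eq_top
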